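/- Let ω ∈ Ω^r be p-Cartan with 1 ≤ p ≤ r. Then: (a) for every X ∈ 𝔇, the interior product i_X ω is a (p−1)-Cartan form in Ω^{r−1} and the Lie derivative L_X ω is a (p−1)-Cartan form in Ω^r; (b) if moreover X ∈ 𝒟, then i_X ω is a p-Cartan form in Ω^{r−1}. -/

import Mathlib

/-- The raw Cartan formula for the exterior differential: for an `r`-argument map
`ω : 𝔇^r → A` on the derivations `𝔇 = Der_𝔽(A)`, `cartanD ω : 𝔇^{r+1} → A` is
`dω(X_0,…,X_r) = (r+1)⁻¹ ( Σ_s (−1)^s X_s (ω(X_0,…,X̂_s,…,X_r))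
  + Σ_{s<t} (−1)^{s+t} ω(⁅X_s,X_t⁆, X_0,…,X̂_s,…,X̂_t,…,X_r) )`. -/
noncomputable def cartanD {𝔽 : Type*} [Field 𝔽] [CharZero 𝔽]
    {A : Type*} [CommRing A] [Algebra 𝔽 A] {r : ℕ}
    (ω : (Fin r → Derivation 𝔽 A A) → A) :
    (Fin (r + 1) → Derivation 𝔽 A A) → A :=
  fun X =>
    ((r + 1 : 𝔽))⁻¹ • (
      (∑ s : Fin (r + 1), (-1 : A) ^ (s : ℕ) * X s (ω (s.removeNth X))) +
      ∑ s : Fin (r + 1), ∑ t : Fin (r + 1),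
        if s < t then
          (-1 : A) ^ ((s : ℕ) + (t : ℕ)) *
            ω (fun u : Fin r =>
              if (u : ℕ) = 0 then ⁅X s, X t⁆
              else X ⟨if (u : ℕ) - 1 < (s : ℕ) then (u : ℕ) - 1
                      else if (u : ℕ) < (t : ℕ) then (u : ℕ) else (u : ℕ) + 1,
                      by have h1 := u.isLt; split
                         · omega
                         · split <;> omega⟩)
        else 0)

/-- The interior product `i_X ω (X_1,…,X_{r-1}) = r · ω(X, X_1,…,X_{r-1})` (raw form). -/
def iProdRaw {𝔽 : Type*} [Field 𝔽] [CharZero 𝔽]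
    {A : Type*} [CommRing A] [Algebra 𝔽 A] {r : ℕ}
    (X : Derivation 𝔽 A A) (ω : (Fin r → Derivation 𝔽 A A) → A) :
    (Fin (r - 1) → Derivation 𝔽 A A) → A :=
  fun Y => (r : A) * ω (fun u => if h : (u : ℕ) = 0 then X
    else Y ⟨(u : ℕ) - 1, by have h1 := u.isLt; omega⟩)

/-- The Lie derivative
`L_X ω (X_1,…,X_r) = X (ω (X_1,…,X_r)) − Σ_s ω(X_1,…,⁅X,X_s⁆,…,X_r)` (raw form). -/
def lieDerivRaw {𝔽 : Type*} [Field 𝔽] [CharZero 𝔽]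
    {A : Type*} [CommRing A] [Algebra 𝔽 A] {r : ℕ}
    (X : Derivation 𝔽 A A) (ω : (Fin r → Derivation 𝔽 A A) → A) :
    (Fin r → Derivation 𝔽 A A) → A :=
  fun Y => X (ω Y) - ∑ s : Fin r, ω (Function.update Y s ⁅X, Y s⁆)

/-- `ω : 𝔇^r → A` is a `p`-Cartan form (w.r.t. the Cartan subalgebra `𝒟`) if
`ω(X_1,…,X_r) = 0` whenever at least `r - p + 1` of the arguments belong to `𝒟`. -/
def IsPCartan {𝔽 : Type*} [Field 𝔽] [CharZero 𝔽]
    {A : Type*} [CommRing A] [Algebra 𝔽 A] {r : ℕ}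
    (𝒟 : Submodule A (Derivation 𝔽 A A)) (p : ℕ)
    (ω : (Fin r → Derivation 𝔽 A A) → A) : Prop :=
  ∀ (Y : Fin r → Derivation 𝔽 A A) (S : Finset (Fin r)),
    r - p + 1 ≤ S.card → (∀ s ∈ S, Y s ∈ 𝒟) → ω Y = 0

set_option linter.unusedSectionVars false
set_option linter.unusedVariables false

section CartanAux

open Function Finset

variable {𝔽 : Type*} [Field 𝔽] [CharZero 𝔽] {A : Type*} [CommRing A] [Algebra 𝔽 A]

lemma bracket_smul_aux (X Y : Derivation 𝔽 A A) (c : A) :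
    ⁅X, c • Y⁆ = c • ⁅X, Y⁆ + (X c) • Y := by
  ext a
  simp only [Derivation.commutator_apply, Derivation.add_apply, Derivation.smul_apply,
    smul_eq_mul, Derivation.leibniz]
  ring

/-- The insertion of `X` in front of `Y`. -/
def insMap {r : ℕ} (X : Derivation 𝔽 A A) (Y : Fin (r - 1) → Derivation 𝔽 A A) :
    Fin r → Derivation 𝔽 A A :=
  fun u => if h : (u : ℕ) = 0 then X else Y ⟨(u : ℕ) - 1, by have h1 := u.isLt; omega⟩

def finSuccIdx {r : ℕ} (i : Fin (r - 1)) : Fin r := ⟨(i : ℕ) + 1, by have := i.isLt; omega⟩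

lemma finSuccIdx_injective {r : ℕ} : Function.Injective (finSuccIdx (r := r)) := by
  intro i j h
  rw [Fin.ext_iff] at h ⊢
  simpa [finSuccIdx] using h

lemma insMap_succ {r : ℕ} (X : Derivation 𝔽 A A) (Y : Fin (r - 1) → Derivation 𝔽 A A)
    (i : Fin (r - 1)) : insMap X Y (finSuccIdx i) = Y i := by
  simp only [insMap, finSuccIdx]
  have hne : ¬ ((i : ℕ) + 1 = 0) := by omega
  exact (dif_neg hne).trans (congrArg Y (Fin.ext (Nat.add_sub_cancel _ _)))

lemma insMap_update {r : ℕ} (X : Derivation 𝔽 A A) (Y : Fin (r - 1) → Derivation 𝔽 A A)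
    (i : Fin (r - 1)) (x : Derivation 𝔽 A A) :
    insMap X (Function.update Y i x) = Function.update (insMap X Y) (finSuccIdx i) x := by
  funext v
  rcases eq_or_ne v (finSuccIdx i) with rfl | hv
  · rw [Function.update_self, insMap_succ, Function.update_self]
  · rw [Function.update_of_ne hv]
    by_cases h0 : (v : ℕ) = 0
    · simp [insMap, h0]
    · simp only [insMap, dif_neg h0]
      rw [Function.update_of_ne (fun hc => hv (by
        have hval : (v : ℕ) - 1 = (i : ℕ) := congrArg Fin.val hc
        exact Fin.ext (by simp only [finSuccIdx]; omega)))]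

lemma iProdRaw_eq {r : ℕ} (X : Derivation 𝔽 A A)
    (ω : AlternatingMap A (Derivation 𝔽 A A) A (Fin r))
    (Y : Fin (r - 1) → Derivation 𝔽 A A) :
    iProdRaw X (⇑ω) Y = (r : A) * ω (insMap X Y) := rfl

/-- `i_X ω` as an alternating map. -/
noncomputable def iProdAlt {r : ℕ} (X : Derivation 𝔽 A A)
    (ω : AlternatingMap A (Derivation 𝔽 A A) A (Fin r)) :
    AlternatingMap A (Derivation 𝔽 A A) A (Fin (r - 1)) :=
  { toFun := iProdRaw X (⇑ω),
    map_update_add' := by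
      intro inst Y i x y
      have h : inst = instDecidableEqFin _ := Subsingleton.elim _ _
      subst h
      rw [iProdRaw_eq, iProdRaw_eq, iProdRaw_eq, insMap_update, insMap_update, insMap_update,
        ω.map_update_add, mul_add],
    map_update_smul' := by
      intro inst Y i c x
      have h : inst = instDecidableEqFin _ := Subsingleton.elim _ _
      subst h
      rw [iProdRaw_eq, iProdRaw_eq, insMap_update, insMap_update, ω.map_update_smul,
        smul_eq_mul, smul_eq_mul]
      ring,
    map_eq_zero_of_eq' := by
      intro Y i j h hij
      show iProdRaw X (⇑ω) Y = 0
      rw [iProdRaw_eq, ω.map_eq_zero_of_eq (insMap X Y) (i := finSuccIdx i) (j := finSuccIdx j)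
        (by rw [insMap_succ, insMap_succ]; exact h) (fun hc => hij (finSuccIdx_injective hc)),
        mul_zero] }

lemma lieDerivRaw_eq {r : ℕ} (X : Derivation 𝔽 A A)
    (ω : AlternatingMap A (Derivation 𝔽 A A) A (Fin r))
    (Y : Fin r → Derivation 𝔽 A A) :
    lieDerivRaw X (⇑ω) Y = X (ω Y) - ∑ s : Fin r, ω (Function.update Y s ⁅X, Y s⁆) := rfl

/-- `L_X ω` as an alternating map. -/
noncomputable def lieDerivAlt {r : ℕ} (X : Derivation 𝔽 A A)
    (ω : AlternatingMap A (Derivation 𝔽 A A) A (Fin r)) :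
    AlternatingMap A (Derivation 𝔽 A A) A (Fin r) :=
  { toFun := lieDerivRaw X (⇑ω),
    map_update_add' := by
      intro inst Y i x y
      have h : inst = instDecidableEqFin _ := Subsingleton.elim _ _
      subst h
      have hterm : ∀ s : Fin r,
          ω (update (update Y i (x + y)) s ⁅X, update Y i (x + y) s⁆)
            = ω (update (update Y i x) s ⁅X, update Y i x s⁆)
              + ω (update (update Y i y) s ⁅X, update Y i y s⁆) := by
        intro s
        by_cases hs : s = i
        · subst hs
          simp only [update_self, update_idem]
          rw [lie_add, ω.map_update_add]
        · rw [update_of_ne hs, update_of_ne hs, update_of_ne hs,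
            update_comm (Ne.symm hs), update_comm (Ne.symm hs), update_comm (Ne.symm hs),
            ω.map_update_add]
      rw [lieDerivRaw_eq, lieDerivRaw_eq, lieDerivRaw_eq, ω.map_update_add, map_add,
        Finset.sum_congr rfl (fun s _ => hterm s), Finset.sum_add_distrib]
      ring,
    map_update_smul' := by
      intro inst Y i c x
      have h : inst = instDecidableEqFin _ := Subsingleton.elim _ _
      subst h
      have hterm : ∀ s : Fin r,
          ω (update (update Y i (c • x)) s ⁅X, update Y i (c • x) s⁆)
            = c • ω (update (update Y i x) s ⁅X, update Y i x s⁆)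
              + (if s = i then (X c) • ω (update Y i x) else 0) := by
        intro s
        by_cases hs : s = i
        · subst hs
          simp only [update_self, update_idem, eq_self_iff_true, if_true]
          rw [bracket_smul_aux, ω.map_update_add, ω.map_update_smul, ω.map_update_smul]
        · rw [if_neg hs, add_zero, update_of_ne hs, update_of_ne hs,
            update_comm (Ne.symm hs), update_comm (Ne.symm hs), ω.map_update_smul]
      rw [lieDerivRaw_eq, lieDerivRaw_eq, ω.map_update_smul,
        Finset.sum_congr rfl (fun s _ => hterm s), Finset.sum_add_distrib,
        Finset.sum_ite_eq' Finset.univ i (fun _ => (X c) • ω (update Y i x)),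
        if_pos (Finset.mem_univ i)]
      simp only [smul_eq_mul, Derivation.leibniz, Finset.smul_sum, Finset.mul_sum]
      try rw [Finset.mul_sum]
      try rw [← Finset.mul_sum]
      ring,
    map_eq_zero_of_eq' := by
      intro Y i j h hij
      show lieDerivRaw X (⇑ω) Y = 0
      rw [lieDerivRaw_eq, ω.map_eq_zero_of_eq Y h hij, map_zero]
      have hsum : ∑ s : Fin r, ω (update Y s ⁅X, Y s⁆) = 0 := by
        rw [← Finset.sum_subset (Finset.subset_univ {i, j})
          (fun s _ hs => by
            simp only [Finset.mem_insert, Finset.mem_singleton, not_or] at hs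
            exact ω.map_eq_zero_of_eq _
              (show update Y s ⁅X, Y s⁆ i = update Y s ⁅X, Y s⁆ j by
                rw [update_of_ne (Ne.symm hs.1), update_of_ne (Ne.symm hs.2)]; exact h) hij)]
        rw [Finset.sum_pair hij]
        have hupd : Function.update Y j ⁅X, Y j⁆
            = (Function.update Y i ⁅X, Y i⁆) ∘ (Equiv.swap i j) := by
          funext k
          rcases eq_or_ne k i with rfl | hki
          · rw [Function.comp_apply, Equiv.swap_apply_left, update_of_ne hij,
              update_of_ne (Ne.symm hij)]
            exact h
          · rcases eq_or_ne k j with rfl | hkj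
            · rw [Function.comp_apply, Equiv.swap_apply_right, update_self, update_self, h]
            · rw [Function.comp_apply, Equiv.swap_apply_of_ne_of_ne hki hkj,
                update_of_ne hkj, update_of_ne hki]
        rw [hupd, ω.map_swap _ hij, add_neg_cancel]
      rw [hsum, sub_zero] }

end CartanAux

/-- Let `𝒟 ⊆ 𝔇` be an `A`-submodule closed under the bracket and let
`ω ∈ Ω^r` be a `p`-Cartan form with `1 ≤ p ≤ r`. Then (a) for every `X ∈ 𝔇` the interior
product `i_X ω` is a `(p-1)`-Cartan form in `Ω^{r-1}` and the Lie derivative `L_X ω` is a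
`(p-1)`-Cartan form in `Ω^r`; (b) if moreover `X ∈ 𝒟`, then `i_X ω` is a `p`-Cartan form
in `Ω^{r-1}`. -/
theorem iProd_lieDeriv_cartan_degree {𝔽 : Type*} [Field 𝔽] [CharZero 𝔽]
    {A : Type*} [CommRing A] [Algebra 𝔽 A]
    (𝒟 : Submodule A (Derivation 𝔽 A A))
    (h𝒟 : ∀ X ∈ 𝒟, ∀ Y ∈ 𝒟, ⁅X, Y⁆ ∈ 𝒟)
    (r p : ℕ) (hp1 : 1 ≤ p) (hpr : p ≤ r)
    (ω : AlternatingMap A (Derivation 𝔽 A A) A (Fin r))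
    (hω : IsPCartan 𝒟 p (⇑ω)) :
    (∀ X : Derivation 𝔽 A A,
      ((∃ η : AlternatingMap A (Derivation 𝔽 A A) A (Fin (r - 1)),
          ⇑η = iProdRaw X (⇑ω)) ∧ IsPCartan 𝒟 (p - 1) (iProdRaw X (⇑ω))) ∧
      ((∃ η : AlternatingMap A (Derivation 𝔽 A A) A (Fin r),
          ⇑η = lieDerivRaw X (⇑ω)) ∧ IsPCartan 𝒟 (p - 1) (lieDerivRaw X (⇑ω)))) ∧
    (∀ X ∈ 𝒟, IsPCartan 𝒟 p (iProdRaw X (⇑ω))) := by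
  have hr0 : 0 < r := lt_of_lt_of_le hp1 hpr
  have hiP : ∀ X : Derivation 𝔽 A A, IsPCartan 𝒟 (p - 1) (iProdRaw X (⇑ω)) := by
    intro X Y S hcard hS
    have hc : r - p + 1 ≤ (S.image finSuccIdx).card := by
      rw [Finset.card_image_of_injective _ finSuccIdx_injective]
      omega
    have hm : ∀ t ∈ S.image finSuccIdx, insMap X Y t ∈ 𝒟 := by
      intro t ht
      rcases Finset.mem_image.mp ht with ⟨s, hs, rfl⟩
      rw [insMap_succ]
      exact hS s hs
    rw [iProdRaw_eq, hω _ _ hc hm, mul_zero]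
  have hlP : ∀ X : Derivation 𝔽 A A, IsPCartan 𝒟 (p - 1) (lieDerivRaw X (⇑ω)) := by
    intro X Y S hcard hS
    have h2 : ∀ s ∈ Finset.univ, ω (Function.update Y s ⁅X, Y s⁆) = 0 := by
      intro s _
      have hc : r - p + 1 ≤ (S.erase s).card := by
        have h3 : S.card - 1 ≤ (S.erase s).card := Finset.pred_card_le_card_erase
        omega
      refine hω _ _ hc ?_
      intro t ht
      rw [Function.update_of_ne (Finset.ne_of_mem_erase ht)]
      exact hS t (Finset.mem_of_mem_erase ht)
    rw [lieDerivRaw_eq, hω Y S (by omega) hS, map_zero, Finset.sum_eq_zero h2, sub_zero]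
  refine ⟨fun X => ⟨⟨⟨iProdAlt X ω, rfl⟩, hiP X⟩, ⟨⟨lieDerivAlt X ω, rfl⟩, hlP X⟩⟩, ?_⟩
  intro X hX Y S hcard hS
  have hz : (⟨0, hr0⟩ : Fin r) ∉ S.image finSuccIdx := by
    intro hc
    rcases Finset.mem_image.mp hc with ⟨s, _, heq⟩
    have h4 := congrArg Fin.val heq
    simp [finSuccIdx] at h4
  have hc : r - p + 1 ≤ (insert (⟨0, hr0⟩ : Fin r) (S.image finSuccIdx)).card := by
    rw [Finset.card_insert_of_notMem hz,
      Finset.card_image_of_injective _ finSuccIdx_injective]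
    omega
  have hm : ∀ t ∈ insert (⟨0, hr0⟩ : Fin r) (S.image finSuccIdx), insMap X Y t ∈ 𝒟 := by
    intro t ht
    rcases Finset.mem_insert.mp ht with rfl | ht'
    · simpa [insMap] using hX
    · rcases Finset.mem_image.mp ht' with ⟨s, hs, rfl⟩
      rw [insMap_succ]
      exact hS s hs
  rw [iProdRaw_eq, hω _ _ hc hm, mul_zero]
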